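/- arXiv:2201.06568 — 2 statements merged into one kernel-verified Lean document; each statement's English description precedes it below -/
import Mathlib

section
/- Let (φ_t) be a continuous flow on a compact metric space M and let (P,G,S) be a decomposition of D ⊂ M×ℝ⁺. If G has tail weak specification at every scale δ > 0, then for every M' > 0, G^{M'} has tail weak specification at every scale δ > 0. -/
open MeasureTheory Filter Set

section FlowDefs

variable {M : Type*} [MetricSpace M]

/-- The Bowen metric `d_t(x,y) = sup{d(φ_s x, φ_s y) : 0 ≤ s ≤ t}`. -/
noncomputable def bowenDist (φ : ℝ → M → M) (t : ℝ) (x y : M) : ℝ :=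
  sSup ((fun s => dist (φ s x) (φ s y)) '' Set.Icc 0 t)

/-- The open Bowen ball `B_t(x,ε)`. -/
def bowenBall (φ : ℝ → M → M) (t ε : ℝ) (x : M) : Set M :=
  {y | bowenDist φ t x y < ε}

/-- The closed Bowen ball `B̄_t(x,ε)`. -/
def closedBowenBall (φ : ℝ → M → M) (t ε : ℝ) (x : M) : Set M :=
  {y | bowenDist φ t x y ≤ ε}

/-- A `(t,δ)`-separated set. -/
def IsSeparatedSet (φ : ℝ → M → M) (t δ : ℝ) (E : Set M) : Prop :=
  ∀ ⦃x⦄, x ∈ E → ∀ ⦃y⦄, y ∈ E → x ≠ y → δ < bowenDist φ t x y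

/-- The Birkhoff integral `Φ_0(x,t) = ∫_0^t pot(φ_s x) ds`. -/
noncomputable def birkhoff (φ : ℝ → M → M) (pot : M → ℝ) (x : M) (t : ℝ) : ℝ :=
  ∫ s in (0:ℝ)..t, pot (φ s x)

/-- `Φ_ε(x,t)`: the supremum of Birkhoff integrals over the Bowen ball `B_t(x,ε)`
(for `ε = 0`, the Birkhoff integral itself). -/
noncomputable def PhiSup (φ : ℝ → M → M) (pot : M → ℝ) (ε : ℝ) (x : M) (t : ℝ) : ℝ :=
  if ε = 0 then birkhoff φ pot x t
  else sSup ((fun y => birkhoff φ pot y t) '' bowenBall φ t ε x)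

/-- The two-scale partition function `Λ(C, δ, ε, t)`. -/
noncomputable def partFn (φ : ℝ → M → M) (pot : M → ℝ) (C : Set (M × ℝ)) (δ ε t : ℝ) : ℝ :=
  sSup {r : ℝ | ∃ E : Finset M, (↑E : Set M) ⊆ {x | (x, t) ∈ C} ∧
    IsSeparatedSet φ t δ (↑E : Set M) ∧ r = ∑ x ∈ E, Real.exp (PhiSup φ pot ε x t)}

/-- The pressure `P(C, φ, δ, ε) = limsup_{t→∞} (1/t) log Λ(C,δ,ε,t)`. -/
noncomputable def presAt (φ : ℝ → M → M) (pot : M → ℝ) (C : Set (M × ℝ)) (δ ε : ℝ) : ℝ :=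
  Filter.limsup (fun t => Real.log (partFn φ pot C δ ε t) / t) Filter.atTop

/-- The topological pressure `P(φ) = lim_{δ→0} P(M×ℝ⁺, φ, δ, 0)`
(the limit equals the supremum over `δ > 0` by monotonicity). -/
noncomputable def topPres (φ : ℝ → M → M) (pot : M → ℝ) : ℝ :=
  ⨆ δ : Set.Ioi (0:ℝ), presAt φ pot Set.univ (δ : ℝ) 0

/-- The set of points where the flow is "expansive" at scale ε: the two-sided infinite
Bowen ball `Γ_ε(x)` is contained in a finite piece of orbit `φ_{[-s,s]}(x)`. -/
def ExpansivePts (φ : ℝ → M → M) (ε : ℝ) : Set M :=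
  {x | ∃ s > 0, {y | ∀ t : ℝ, dist (φ t x) (φ t y) ≤ ε} ⊆ (fun u => φ u x) '' Set.Icc (-s) s}

variable [MeasurableSpace M]

/-- A flow-invariant measure. -/
def FlowInvariant (φ : ℝ → M → M) (μ : Measure M) : Prop :=
  ∀ t : ℝ, MeasurePreserving (φ t) μ μ

/-- An ergodic measure for the flow: every flow-invariant measurable set has
measure `0` or `1`. -/
def FlowErgodic (φ : ℝ → M → M) (μ : Measure M) : Prop :=
  ∀ A : Set M, MeasurableSet A → (∀ t : ℝ, φ t ⁻¹' A = A) → μ A = 0 ∨ μ A = 1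

/-- The flow is almost expansive at scale ε if `Exp_ε` has full measure for every
ergodic flow-invariant Borel probability measure. -/
def AlmostExpansive (φ : ℝ → M → M) (ε : ℝ) : Prop :=
  ∀ μ : Measure M, IsProbabilityMeasure μ → FlowInvariant φ μ → FlowErgodic φ μ →
    μ (ExpansivePts φ ε) = 1

/-- A finite measurable partition of the space. -/
def IsMPartition (P : Finset (Set M)) : Prop :=
  (∀ A ∈ P, MeasurableSet A) ∧ (∀ A ∈ P, ∀ B ∈ P, A ≠ B → A ∩ B = ∅) ∧
    ⋃ A ∈ P, A = Set.univ

/-- The Shannon entropy of a finite partition. -/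
noncomputable def partEntropy (μ : Measure M) (P : Finset (Set M)) : ℝ :=
  ∑ A ∈ P, Real.negMulLog (μ A).toReal

/-- The join `⋁_{i<n} T^{-i} P` of a finite partition under a map `T`. -/
noncomputable def joinPart (T : M → M) (P : Finset (Set M)) (n : ℕ) : Finset (Set M) := by
  classical
  exact Finset.image (fun f : Fin n → {A // A ∈ P} => ⋂ i : Fin n, T^[(i : ℕ)] ⁻¹' (f i : Set M))
    Finset.univ

/-- The Kolmogorov–Sinai (measure-theoretic) entropy of `T` with respect to `μ`. -/
noncomputable def ksEntropy (μ : Measure M) (T : M → M) : ℝ :=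
  ⨆ P : {P : Finset (Set M) // IsMPartition P},
    Filter.liminf (fun n : ℕ => partEntropy μ (joinPart T (P : Finset (Set M)) n) / n)
      Filter.atTop

/-- An equilibrium state: a flow-invariant Borel probability measure with
`h_μ(φ_1) + ∫ pot dμ = P(pot)`. -/
def IsEqState (φ : ℝ → M → M) (pot : M → ℝ) (μ : Measure M) : Prop :=
  IsProbabilityMeasure μ ∧ FlowInvariant φ μ ∧
    ksEntropy μ (φ 1) + ∫ x, pot x ∂μ = topPres φ pot

end FlowDefs

section OrbitDefs

variable {M : Type*} [MetricSpace M]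

/-- A decomposition `(P, G, S)` of a collection `D` of orbit segments. -/
def IsDecomposition (φ : ℝ → M → M) (D PP GG SS : Set (M × ℝ)) (p g s : M → ℝ → ℝ) : Prop :=
  ∀ ⦃x : M⦄ ⦃t : ℝ⦄, (x, t) ∈ D →
    0 ≤ p x t ∧ 0 ≤ g x t ∧ 0 ≤ s x t ∧ p x t + g x t + s x t = t ∧
    (x, p x t) ∈ PP ∧ (φ (p x t) x, g x t) ∈ GG ∧ (φ (p x t + g x t) x, s x t) ∈ SS

/-- `G^{M'}`: orbit segments in `D` whose prefix and suffix in the decomposition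
are shorter than `M'`. -/
def GM (D : Set (M × ℝ)) (p s : M → ℝ → ℝ) (M' : ℝ) : Set (M × ℝ) :=
  {xt ∈ D | p xt.1 xt.2 < M' ∧ s xt.1 xt.2 < M'}

/-- `[C]`: the discrete-time enlargement of a collection of orbit segments. -/
def bracket (φ : ℝ → M → M) (C : Set (M × ℝ)) : Set (M × ℝ) :=
  {xt | ∃ n : ℕ, xt.2 = (n : ℝ) ∧ ∃ s ∈ Set.Ico (0:ℝ) 1, ∃ u ∈ Set.Ico (0:ℝ) 1,
    (φ (-s) xt.1, (n : ℝ) + s + u) ∈ C}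

/-- Weak specification at scale `δ` with maximum gap size `τ`. -/
def HasWeakSpec (φ : ℝ → M → M) (G : Set (M × ℝ)) (δ τ : ℝ) : Prop :=
  ∀ (k : ℕ) (xs : Fin k → M) (ts : Fin k → ℝ),
    (∀ i, (xs i, ts i) ∈ G) →
    ∃ (y : M) (gap : Fin k → ℝ),
      (∀ i, gap i ∈ Set.Icc (0:ℝ) τ) ∧ (∀ i : Fin k, (i : ℕ) = 0 → gap i = 0) ∧
      ∀ j : Fin k,
        bowenDist φ (ts j)
          (φ ((∑ i ∈ Finset.Iio j, ts i) + ∑ i ∈ Finset.Iic j, gap i) y) (xs j) < δ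

/-- Tail weak specification at scale `δ`: `G ∩ (M × [T₀,∞))` has weak specification
at scale `δ` for some `T₀ > 0`. -/
def HasTailWeakSpec (φ : ℝ → M → M) (G : Set (M × ℝ)) (δ : ℝ) : Prop :=
  ∃ T₀ > (0:ℝ), ∃ τ ≥ (0:ℝ), HasWeakSpec φ (G ∩ {xt | T₀ ≤ xt.2}) δ τ

/-- The Bowen property at scale `ε` on a collection `C` of orbit segments. -/
def HasBowenProp (φ : ℝ → M → M) (pot : M → ℝ) (C : Set (M × ℝ)) (ε : ℝ) : Prop :=
  ∃ K > (0:ℝ), ∀ ⦃x : M⦄ ⦃t : ℝ⦄, (x, t) ∈ C → ∀ y ∈ bowenBall φ t ε x,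
    |birkhoff φ pot x t - birkhoff φ pot y t| ≤ K

/-- `φ_{i,j}(C) = {(φ_i x, t−(i+j)) : (x,t) ∈ C}`. -/
def shiftSeg (φ : ℝ → M → M) (i j : ℝ) (C : Set (M × ℝ)) : Set (M × ℝ) :=
  (fun xt : M × ℝ => (φ i xt.1, xt.2 - (i + j))) '' C

end OrbitDefs


private lemma finSum_Iio_eq {K : ℕ} (f : Fin K → ℝ) (j : Fin K) :
    ∑ i ∈ Finset.Iio j, f i
      = ∑ m ∈ Finset.range (j : ℕ), (fun m => if h : m < K then f ⟨m, h⟩ else 0) m := by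
  have h1 : Finset.range (j : ℕ) = Finset.Iio (j : ℕ) := by
    ext m; simp [Finset.mem_range, Finset.mem_Iio]
  rw [h1, ← Fin.map_valEmbedding_Iio, Finset.sum_map]
  refine Finset.sum_congr rfl (fun i _ => ?_)
  simp only [Fin.valEmbedding_apply]
  rw [dif_pos i.isLt, Fin.eta]

private lemma finSum_Iic_eq {K : ℕ} (f : Fin K → ℝ) (j : Fin K) :
    ∑ i ∈ Finset.Iic j, f i
      = ∑ m ∈ Finset.range ((j : ℕ) + 1), (fun m => if h : m < K then f ⟨m, h⟩ else 0) m := by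
  have h1 : Finset.range ((j : ℕ) + 1) = Finset.Iic (j : ℕ) := by
    ext m; simp [Finset.mem_range, Finset.mem_Iic, Nat.lt_succ_iff]
  rw [h1, ← Fin.map_valEmbedding_Iic, Finset.sum_map]
  refine Finset.sum_congr rfl (fun i _ => ?_)
  simp only [Fin.valEmbedding_apply]
  rw [dif_pos i.isLt, Fin.eta]

private lemma dist_le_bowenDist {M : Type*} [MetricSpace M]
    {φ : ℝ → M → M} (hcont : Continuous fun q : ℝ × M => φ q.1 q.2)
    {t u : ℝ} (x y : M) (hu : u ∈ Set.Icc 0 t) :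
    dist (φ u x) (φ u y) ≤ bowenDist φ t x y := by
  apply le_csSup
  · have hc : Continuous fun s : ℝ => dist (φ s x) (φ s y) :=
      (hcont.comp (continuous_id.prodMk continuous_const)).dist
        (hcont.comp (continuous_id.prodMk continuous_const))
    exact (isCompact_Icc.image hc).bddAbove
  · exact ⟨u, hu, rfl⟩

private lemma unif_cont_flow {M : Type*} [MetricSpace M] [CompactSpace M]
    {φ : ℝ → M → M} (hcont : Continuous fun q : ℝ × M => φ q.1 q.2)
    (M' : ℝ) {ε : ℝ} (hε : 0 < ε) :
    ∃ δ' > 0, ∀ a b : M, dist a b < δ' → ∀ u : ℝ, |u| ≤ M' →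
      dist (φ u a) (φ u b) < ε := by
  have hK : IsCompact ((Set.Icc (-M') M') ×ˢ (Set.univ : Set M)) :=
    isCompact_Icc.prod isCompact_univ
  have hUC := hK.uniformContinuousOn_of_continuous hcont.continuousOn
  rw [Metric.uniformContinuousOn_iff] at hUC
  obtain ⟨δ', hδ'pos, H⟩ := hUC ε hε
  refine ⟨δ', hδ'pos, fun a b hab u hu => ?_⟩
  have hu' : u ∈ Set.Icc (-M') M' := by
    rcases abs_le.mp hu with ⟨h1, h2⟩; exact ⟨h1, h2⟩
  have h1 : ((u, a) : ℝ × M) ∈ (Set.Icc (-M') M') ×ˢ (Set.univ : Set M) := ⟨hu', trivial⟩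
  have h2 : ((u, b) : ℝ × M) ∈ (Set.Icc (-M') M') ×ˢ (Set.univ : Set M) := ⟨hu', trivial⟩
  have hd : dist ((u, a) : ℝ × M) ((u, b) : ℝ × M) < δ' := by
    rw [Prod.dist_eq, dist_self, max_eq_right dist_nonneg]
    exact hab
  exact H _ h1 _ h2 hd


/-- If G has tail weak specification at every scale δ > 0, then so does
G^{M'} for every M' > 0. -/
theorem GM_tail_spec_of_tail_spec_all_scales
    {M : Type*} [MetricSpace M] [CompactSpace M]
    (φ : ℝ → M → M)
    (hcont : Continuous fun q : ℝ × M => φ q.1 q.2)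
    (hid : ∀ x, φ 0 x = x)
    (hadd : ∀ u v x, φ (u + v) x = φ u (φ v x))
    (D PP GG SS : Set (M × ℝ)) (hD : D ⊆ {xt : M × ℝ | 0 ≤ xt.2})
    (p g s : M → ℝ → ℝ)
    (hdec : IsDecomposition φ D PP GG SS p g s)
    (hspec : ∀ δ : ℝ, 0 < δ → HasTailWeakSpec φ GG δ) :
    ∀ M' : ℝ, 0 < M' → ∀ δ : ℝ, 0 < δ → HasTailWeakSpec φ (GM D p s M') δ := by
  intro M' hM' δ hδ
  obtain ⟨δ₁, hδ₁pos, hδ₁⟩ := unif_cont_flow hcont M' (half_pos hδ)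
  have hδ₂pos : 0 < min δ₁ (δ/2) := lt_min hδ₁pos (half_pos hδ)
  obtain ⟨T₀, hT₀, τ, hτ, hO⟩ := hspec (min δ₁ (δ/2)) hδ₂pos
  by_cases hne : ∃ zL : M × ℝ, zL ∈ GG ∩ {xt | T₀ ≤ xt.2}
  swap
  · -- the tail of GG is empty, hence so is the tail of GM
    refine ⟨T₀ + 2*M', by linarith, 0, le_rfl, ?_⟩
    intro k xs ts hmem
    obtain ⟨y₀, -, -, -⟩ := hO 0 (fun i => i.elim0) (fun i => i.elim0) (fun i => i.elim0)
    rcases Nat.eq_zero_or_pos k with hk | hk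
    · subst hk
      exact ⟨y₀, fun _ => 0, fun i => i.elim0, fun i => i.elim0, fun j => j.elim0⟩
    · exfalso
      obtain ⟨⟨hD0, hp0, hs0⟩, hT0⟩ := hmem ⟨0, hk⟩
      obtain ⟨hp, hg, hs, heq, -, hGG, -⟩ := hdec hD0
      refine hne ⟨(φ (p (xs ⟨0, hk⟩) (ts ⟨0, hk⟩)) (xs ⟨0, hk⟩),
        g (xs ⟨0, hk⟩) (ts ⟨0, hk⟩)), hGG, ?_⟩
      simp only [Set.mem_setOf_eq] at hT0 ⊢
      linarith
  · obtain ⟨⟨z₀, L₀⟩, hz₀GG, hz₀T⟩ := hne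
    simp only [Set.mem_setOf_eq] at hz₀T
    have hL₀pos : 0 < L₀ := lt_of_lt_of_le hT₀ hz₀T
    set n : ℕ := ⌈(2*M') / T₀⌉₊ with hn
    have hnT : 2*M' ≤ (n : ℝ) * T₀ := by
      have h1 : (2*M') / T₀ ≤ (n : ℝ) := Nat.le_ceil _
      calc 2*M' = ((2*M')/T₀) * T₀ := by field_simp
        _ ≤ (n : ℝ) * T₀ := mul_le_mul_of_nonneg_right h1 hT₀.le
    have hnL : 2*M' ≤ (n : ℝ) * L₀ :=
      le_trans hnT (mul_le_mul_of_nonneg_left hz₀T (Nat.cast_nonneg n))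
    have hτ'nonneg : (0:ℝ) ≤ (n : ℝ) * L₀ + ((n : ℝ) + 1) * τ := by positivity
    refine ⟨T₀ + 2*M', by linarith, (n : ℝ) * L₀ + ((n : ℝ) + 1) * τ, hτ'nonneg, ?_⟩
    intro k xs ts hmem
    rcases Nat.eq_zero_or_pos k with hk | hkpos
    · subst hk
      exact ⟨z₀, fun _ => 0, fun i => i.elim0, fun i => i.elim0, fun j => j.elim0⟩
    -- abbreviations
    set pv : Fin k → ℝ := fun j => p (xs j) (ts j) with hpv
    set sv : Fin k → ℝ := fun j => s (xs j) (ts j) with hsv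
    set gv : Fin k → ℝ := fun j => g (xs j) (ts j) with hgv
    set yy : Fin k → M := fun j => φ (pv j) (xs j) with hyy
    have hfacts : ∀ j : Fin k, 0 ≤ pv j ∧ 0 ≤ gv j ∧ 0 ≤ sv j ∧
        pv j + gv j + sv j = ts j ∧ (yy j, gv j) ∈ GG ∧ pv j < M' ∧ sv j < M' ∧
        T₀ + 2*M' ≤ ts j := by
      intro j
      obtain ⟨⟨hDj, hpj, hsj⟩, hTj⟩ := hmem j
      obtain ⟨h1, h2, h3, h4, -, h6, -⟩ := hdec hDj
      exact ⟨h1, h2, h3, h4, h6, hpj, hsj, hTj⟩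
    have hgT₀ : ∀ j : Fin k, T₀ ≤ gv j := by
      intro j
      obtain ⟨h1, h2, h3, h4, -, h6, h7, h8⟩ := hfacts j
      linarith
    -- the padded collection fed to the specification oracle
    set K : ℕ := k * (n + 1) with hK
    have hKpos : 0 < K := Nat.mul_pos hkpos (Nat.succ_pos n)
    have hidx : ∀ m : Fin K, m.1 / (n+1) < k := by
      intro m
      exact (Nat.div_lt_iff_lt_mul (Nat.succ_pos n)).mpr m.2
    set ws : Fin K → M := fun m =>
      if m.1 % (n+1) = 0 then yy ⟨m.1 / (n+1), hidx m⟩ else z₀ with hws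
    set ls : Fin K → ℝ := fun m =>
      if m.1 % (n+1) = 0 then gv ⟨m.1 / (n+1), hidx m⟩ else L₀ with hls
    have hwsmem : ∀ m : Fin K, (ws m, ls m) ∈ GG ∩ {xt | T₀ ≤ xt.2} := by
      intro m
      by_cases h : m.1 % (n+1) = 0
      · simp only [hws, hls, if_pos h]
        exact ⟨(hfacts _).2.2.2.2.1, hgT₀ _⟩
      · simp only [hws, hls, if_neg h]
        exact ⟨hz₀GG, hz₀T⟩
    obtain ⟨Y, γ, hγIcc, hγ0, hsh⟩ := hO K ws ls hwsmem
    -- ℕ-indexed extensions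
    set Fls : ℕ → ℝ := fun m => if h : m < K then ls ⟨m, h⟩ else 0 with hFls
    set Fγ : ℕ → ℝ := fun m => if h : m < K then γ ⟨m, h⟩ else 0 with hFγ
    set AA : ℕ → ℝ := fun r =>
      (∑ m ∈ Finset.range (r*(n+1)), Fls m) + (∑ m ∈ Finset.range (r*(n+1)+1), Fγ m)
      with hAA
    have hmlt : ∀ r : ℕ, r < k → r * (n+1) < K := by
      intro r hr
      exact (Nat.mul_lt_mul_right (Nat.succ_pos n)).mpr hr
    have hcoreval : ∀ (r : ℕ) (hrk : r < k) (hm : r*(n+1) < K),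
        Fls (r*(n+1)) = gv ⟨r, hrk⟩ := by
      intro r hrk hm
      have hdiv : r * (n+1) / (n+1) = r := Nat.mul_div_cancel r (Nat.succ_pos n)
      have hmod : r * (n+1) % (n+1) = 0 := Nat.mul_mod_left r (n+1)
      have e1 : Fls (r*(n+1)) = ls ⟨r*(n+1), hm⟩ := by
        simp only [hFls]
        rw [dif_pos hm]
      rw [e1, hls]
      simp only []
      rw [if_pos hmod]
      congr 1
      exact Fin.ext hdiv
    have hpadval : ∀ (m : ℕ) (hm : m < K), m % (n+1) ≠ 0 → Fls m = L₀ := by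
      intro m hm hmod
      have e1 : Fls m = ls ⟨m, hm⟩ := by
        simp only [hFls]
        rw [dif_pos hm]
      rw [e1, hls]
      simp only []
      rw [if_neg hmod]
    -- oracle shadowing of the cores
    have hcore : ∀ j : Fin k,
        bowenDist φ (gv j) (φ (AA j.1) Y) (yy j) < min δ₁ (δ/2) := by
      intro j
      have hjK : j.1 * (n+1) < K := hmlt j.1 j.2
      set mj : Fin K := ⟨j.1 * (n+1), hjK⟩ with hmj
      have hmod : (mj : ℕ) % (n+1) = 0 := Nat.mul_mod_left _ _
      have hdiv : (mj : ℕ) / (n+1) = j.1 := Nat.mul_div_cancel j.1 (Nat.succ_pos n)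
      have hws' : ws mj = yy j := by
        simp only [hws]
        rw [if_pos hmod]
        congr 1
        exact Fin.ext hdiv
      have hls' : ls mj = gv j := by
        simp only [hls]
        rw [if_pos hmod]
        congr 1
        exact Fin.ext hdiv
      have hA : (∑ i ∈ Finset.Iio mj, ls i) + (∑ i ∈ Finset.Iic mj, γ i) = AA j.1 := by
        rw [finSum_Iio_eq ls mj, finSum_Iic_eq γ mj]
      have := hsh mj
      rw [hws', hls', hA] at this
      exact this
    -- the increments of AA
    have hstep : ∀ (r : ℕ), r + 1 < k → ∀ (hrk : r < k),
        (n : ℝ) * L₀ ≤ AA (r+1) - AA r - gv ⟨r, hrk⟩ ∧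
        AA (r+1) - AA r - gv ⟨r, hrk⟩ ≤ (n : ℝ) * L₀ + ((n : ℝ) + 1) * τ := by
      intro r hr hrk
      have ha : r * (n+1) < K := hmlt r hrk
      have hb : (r+1) * (n+1) < K := hmlt (r+1) hr
      have hle1 : r * (n+1) ≤ (r+1) * (n+1) := Nat.mul_le_mul_right _ (Nat.le_succ r)
      have hFlssum : ∑ m ∈ Finset.range ((r+1)*(n+1)), Fls m
          - ∑ m ∈ Finset.range (r*(n+1)), Fls m
          = gv ⟨r, hrk⟩ + (n : ℝ) * L₀ := by
        rw [← Finset.sum_Ico_eq_sub _ hle1]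
        have he : (r+1)*(n+1) = r*(n+1) + (n+1) := by ring
        rw [he, Finset.sum_Ico_eq_sum_range]
        simp only [Nat.add_sub_cancel_left]
        rw [Finset.sum_range_succ']
        have hrest : ∀ m ∈ Finset.range n, Fls (r*(n+1) + (m+1)) = L₀ := by
          intro m hm
          have hmn : m + 1 < n + 1 := Nat.succ_lt_succ (Finset.mem_range.mp hm)
          have hlt : r*(n+1) + (m+1) < K := by
            have h2 : r*(n+1) + (m+1) < r*(n+1) + (n+1) := by omega
            have h3 : r*(n+1) + (n+1) = (r+1)*(n+1) := by ring
            exact lt_of_lt_of_le (h3 ▸ h2) (le_of_lt hb)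
          have hmod : (r*(n+1) + (m+1)) % (n+1) ≠ 0 := by
            rw [Nat.mul_comm r (n+1), Nat.mul_add_mod, Nat.mod_eq_of_lt hmn]
            omega
          exact hpadval _ hlt hmod
        rw [Finset.sum_congr rfl hrest, Finset.sum_const, Finset.card_range,
          Nat.add_zero, hcoreval r hrk ha, nsmul_eq_mul]
        ring
      have hγsum : ∀ m : ℕ, m < K → 0 ≤ Fγ m ∧ Fγ m ≤ τ := by
        intro m hm
        simp only [hFγ]
        rw [dif_pos hm]
        exact ⟨(hγIcc ⟨m, hm⟩).1, (hγIcc ⟨m, hm⟩).2⟩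
      have hle2 : r * (n+1) + 1 ≤ (r+1) * (n+1) + 1 := by omega
      have hKmem : ∀ m ∈ Finset.Ico (r*(n+1)+1) ((r+1)*(n+1)+1), m < K := by
        intro m hm
        have h2 := (Finset.mem_Ico.mp hm).2
        exact lt_of_lt_of_le h2 (Nat.succ_le_of_lt hb)
      have hγlo : 0 ≤ ∑ m ∈ Finset.range ((r+1)*(n+1)+1), Fγ m
          - ∑ m ∈ Finset.range (r*(n+1)+1), Fγ m := by
        rw [← Finset.sum_Ico_eq_sub _ hle2]
        exact Finset.sum_nonneg (fun m hm => (hγsum m (hKmem m hm)).1)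
      have hγhi : ∑ m ∈ Finset.range ((r+1)*(n+1)+1), Fγ m
          - ∑ m ∈ Finset.range (r*(n+1)+1), Fγ m ≤ ((n:ℝ)+1) * τ := by
        rw [← Finset.sum_Ico_eq_sub _ hle2]
        have hcard : (Finset.Ico (r*(n+1)+1) ((r+1)*(n+1)+1)).card = n+1 := by
          rw [Nat.card_Ico]
          have h3 : (r+1)*(n+1) = r*(n+1) + (n+1) := by ring
          omega
        calc ∑ m ∈ Finset.Ico (r*(n+1)+1) ((r+1)*(n+1)+1), Fγ m
            ≤ (Finset.Ico (r*(n+1)+1) ((r+1)*(n+1)+1)).card • τ :=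
              Finset.sum_le_card_nsmul _ _ _ (fun m hm => (hγsum m (hKmem m hm)).2)
          _ = ((n:ℝ)+1) * τ := by
              rw [hcard, nsmul_eq_mul]
              push_cast
              ring
      have hAAdiff : AA (r+1) - AA r
          = (gv ⟨r, hrk⟩ + (n : ℝ) * L₀)
            + (∑ m ∈ Finset.range ((r+1)*(n+1)+1), Fγ m
              - ∑ m ∈ Finset.range (r*(n+1)+1), Fγ m) := by
        simp only [hAA]
        rw [← hFlssum]
        ring
      constructor
      · rw [show AA (r+1) - AA r - gv ⟨r, hrk⟩
            = (AA (r+1) - AA r) - gv ⟨r, hrk⟩ by ring, hAAdiff]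
        linarith
      · rw [show AA (r+1) - AA r - gv ⟨r, hrk⟩
            = (AA (r+1) - AA r) - gv ⟨r, hrk⟩ by ring, hAAdiff]
        linarith
    -- AA at zero
    have hAA0 : AA 0 = 0 := by
      simp only [hAA, Nat.zero_mul, Finset.range_zero, Finset.sum_empty, zero_add,
        Finset.sum_range_one]
      simp only [hFγ]
      rw [dif_pos hKpos]
      exact hγ0 ⟨0, hKpos⟩ rfl
    -- ℕ-indexed versions of the decomposition data
    set Pv : ℕ → ℝ := fun r => if h : r < k then pv ⟨r, h⟩ else 0 with hPv
    set Sv : ℕ → ℝ := fun r => if h : r < k then sv ⟨r, h⟩ else 0 with hSv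
    set Gv : ℕ → ℝ := fun r => if h : r < k then gv ⟨r, h⟩ else 0 with hGv
    set Tsv : ℕ → ℝ := fun r => if h : r < k then ts ⟨r, h⟩ else 0 with hTsv
    set Gap : ℕ → ℝ := fun r =>
      if r = 0 then 0 else AA r - AA (r-1) - Gv (r-1) - Sv (r-1) - Pv r with hGap
    set gap' : Fin k → ℝ := fun j => Gap j.1 with hgap'
    have hGapsucc : ∀ r : ℕ, Gap (r+1) = AA (r+1) - AA r - Gv r - Sv r - Pv (r+1) := by
      intro r
      simp only [hGap]
      rw [if_neg (Nat.succ_ne_zero r)]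
      simp only [Nat.add_sub_cancel]
    have hgap'Icc : ∀ i : Fin k,
        gap' i ∈ Set.Icc (0:ℝ) ((n : ℝ) * L₀ + ((n : ℝ) + 1) * τ) := by
      intro i
      by_cases h : i.1 = 0
      · have : gap' i = 0 := by
          simp only [hgap', hGap, if_pos h]
        rw [this]
        exact ⟨le_rfl, hτ'nonneg⟩
      · obtain ⟨r, hri⟩ : ∃ r, i.1 = r + 1 :=
          ⟨i.1 - 1, (Nat.succ_pred_eq_of_pos (Nat.pos_of_ne_zero h)).symm⟩
        have hr : r + 1 < k := hri ▸ i.2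
        have hrk : r < k := lt_trans (Nat.lt_succ_self r) hr
        have hieq : gap' i = Gap (r+1) := by
          simp only [hgap', hri]
        rw [hieq, hGapsucc r]
        have hGvr : Gv r = gv ⟨r, hrk⟩ := by simp only [hGv]; rw [dif_pos hrk]
        have hSvr : Sv r = sv ⟨r, hrk⟩ := by simp only [hSv]; rw [dif_pos hrk]
        have hPvr : Pv (r+1) = pv ⟨r+1, hr⟩ := by simp only [hPv]; rw [dif_pos hr]
        rw [hGvr, hSvr, hPvr]
        obtain ⟨hlo, hhi⟩ := hstep r hr hrk
        obtain ⟨-, -, hs1, -, -, -, hs1M, -⟩ := hfacts (⟨r, hrk⟩ : Fin k)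
        obtain ⟨hp2, -, -, -, -, hp2M, -, -⟩ := hfacts (⟨r+1, hr⟩ : Fin k)
        constructor
        · linarith
        · linarith
    have hgap'0 : ∀ i : Fin k, (i : ℕ) = 0 → gap' i = 0 := by
      intro i hi
      simp only [hgap', hGap, if_pos hi]
    -- the telescoping identity
    have hind : ∀ r : ℕ, r < k →
        (∑ m ∈ Finset.range r, Tsv m) + (∑ m ∈ Finset.range (r+1), Gap m)
          = AA r - Pv r + Pv 0 := by
      intro r
      induction r with
      | zero =>
        intro _
        simp only [Finset.range_zero, Finset.sum_empty, Finset.sum_range_one, zero_add]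
        have h0 : Gap 0 = 0 := by simp [hGap]
        rw [h0, hAA0]
        ring
      | succ r ih =>
        intro hr1
        have hrk : r < k := lt_trans (Nat.lt_succ_self r) hr1
        have hIH := ih hrk
        rw [Finset.sum_range_succ, Finset.sum_range_succ (f := Gap)]
        have hTsvr : Tsv r = ts ⟨r, hrk⟩ := by simp only [hTsv]; rw [dif_pos hrk]
        have hGvr : Gv r = gv ⟨r, hrk⟩ := by simp only [hGv]; rw [dif_pos hrk]
        have hSvr : Sv r = sv ⟨r, hrk⟩ := by simp only [hSv]; rw [dif_pos hrk]
        have hPvr : Pv r = pv ⟨r, hrk⟩ := by simp only [hPv]; rw [dif_pos hrk]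
        have hPvr1 : Pv (r+1) = pv ⟨r+1, hr1⟩ := by simp only [hPv]; rw [dif_pos hr1]
        have hts : pv ⟨r, hrk⟩ + gv ⟨r, hrk⟩ + sv ⟨r, hrk⟩ = ts ⟨r, hrk⟩ :=
          (hfacts ⟨r, hrk⟩).2.2.2.1
        rw [hGapsucc r, hTsvr, hGvr, hSvr]
        -- goal: (Σ range r Tsv + ts r) + (Σ range (r+1) Gap + (AA (r+1) - AA r - gv - sv - Pv (r+1))) = AA (r+1) - Pv (r+1) + Pv 0
        have : (∑ m ∈ Finset.range r, Tsv m) + (∑ m ∈ Finset.range (r+1), Gap m)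
          = AA r - Pv r + Pv 0 := hIH
        rw [hPvr] at this
        linarith [hts, this]
    have hB : ∀ j : Fin k,
        (∑ i ∈ Finset.Iio j, ts i) + (∑ i ∈ Finset.Iic j, gap' i)
          = AA j.1 - pv j + pv ⟨0, hkpos⟩ := by
      intro j
      rw [finSum_Iio_eq ts j, finSum_Iic_eq gap' j]
      have h1 : ∀ m ∈ Finset.range (j : ℕ),
          (fun m => if h : m < k then ts ⟨m, h⟩ else 0) m = Tsv m := by
        intro m _
        simp only [hTsv]
      have h2 : ∀ m ∈ Finset.range ((j : ℕ) + 1),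
          (fun m => if h : m < k then gap' ⟨m, h⟩ else 0) m = Gap m := by
        intro m hm
        have hmk : m < k := lt_of_le_of_lt (Nat.lt_succ_iff.mp (Finset.mem_range.mp hm)) j.2
        simp only [hgap']
        rw [dif_pos hmk]
      rw [Finset.sum_congr rfl h1, Finset.sum_congr rfl h2]
      have := hind j.1 j.2
      have hPvj : Pv j.1 = pv j := by
        simp only [hPv]
        rw [dif_pos j.2]
      have hPv0 : Pv 0 = pv ⟨0, hkpos⟩ := by
        simp only [hPv]
        rw [dif_pos hkpos]
      rw [hPvj, hPv0] at this
      exact this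
    -- the shadowing point
    refine ⟨φ (-(pv ⟨0, hkpos⟩)) Y, gap', hgap'Icc, hgap'0, ?_⟩
    intro j
    rw [hB j]
    have hφ : φ (AA j.1 - pv j + pv ⟨0, hkpos⟩) (φ (-(pv ⟨0, hkpos⟩)) Y)
        = φ (AA j.1 - pv j) Y := by
      rw [← hadd]
      congr 1
      ring
    rw [hφ]
    refine lt_of_le_of_lt ?_ (half_lt_self hδ)
    apply Real.sSup_le _ (le_of_lt (half_pos hδ))
    rintro x ⟨v, hv, rfl⟩
    obtain ⟨hv0, hvt⟩ := hv
    obtain ⟨hp0, hg0, hs0, hsum, -, hpM, hsM, -⟩ := hfacts j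
    have hcl : ∀ u : ℝ, u ∈ Set.Icc 0 (gv j) →
        dist (φ u (φ (AA j.1) Y)) (φ u (yy j)) < min δ₁ (δ/2) :=
      fun u hu => lt_of_le_of_lt (dist_le_bowenDist hcont _ _ hu) (hcore j)
    have e1 : φ v (φ (AA j.1 - pv j) Y) = φ (v - pv j) (φ (AA j.1) Y) := by
      rw [← hadd, ← hadd]
      congr 1
      ring
    have hyx : ∀ u : ℝ, φ u (yy j) = φ (u + pv j) (xs j) := by
      intro u
      simp only [hyy]
      rw [← hadd]
    have e2 : φ (v - pv j) (yy j) = φ v (xs j) := by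
      rw [hyx]
      congr 1
      ring
    show dist (φ v (φ (AA (j:ℕ) - pv j) Y)) (φ v (xs j)) ≤ δ / 2
    rw [e1]
    rcases lt_or_ge v (pv j) with hcase | hcase
    · -- prefix
      have hu : |v - pv j| ≤ M' := by
        rw [abs_le]
        constructor
        · linarith
        · linarith
      have hbase : dist (φ (AA j.1) Y) (yy j) < δ₁ := by
        have h0 := hcl 0 ⟨le_rfl, hg0⟩
        rw [hid, hid] at h0
        exact lt_of_lt_of_le h0 (min_le_left _ _)
      have hfin := hδ₁ _ _ hbase (v - pv j) hu
      rw [e2] at hfin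
      exact hfin.le
    · rcases le_or_gt (v - pv j) (gv j) with hcase2 | hcase2
      · -- core
        have hfin := hcl (v - pv j) ⟨by linarith, hcase2⟩
        rw [e2] at hfin
        exact le_of_lt (lt_of_lt_of_le hfin (min_le_right _ _))
      · -- suffix
        have hu1 : 0 < v - pv j - gv j := by linarith
        have hu2 : v - pv j - gv j ≤ sv j := by linarith
        have hu : |v - pv j - gv j| ≤ M' := by
          rw [abs_le]
          constructor
          · linarith
          · linarith
        have hbase : dist (φ (gv j) (φ (AA j.1) Y)) (φ (gv j) (yy j)) < δ₁ :=
          lt_of_lt_of_le (hcl (gv j) ⟨hg0, le_rfl⟩) (min_le_left _ _)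
        have hfin := hδ₁ _ _ hbase (v - pv j - gv j) hu
        have e3 : φ (v - pv j - gv j) (φ (gv j) (φ (AA j.1) Y))
            = φ (v - pv j) (φ (AA j.1) Y) := by
          rw [← hadd]
          congr 1
          ring
        have e4 : φ (v - pv j - gv j) (φ (gv j) (yy j)) = φ v (xs j) := by
          rw [← hadd, hyx]
          congr 1
          ring
        rw [e3, e4] at hfin
        exact hfin.le
end

section
/- Let (φ_t) be a Lipschitz continuous flow on a compact metric space M with L_X = max_{t∈[0,1]} Lip(φ_t) ≥ 1, φ: M → ℝ a continuous potential, δ > 0 and ε = 1000·L_X·δ. Suppose G ⊂ M×ℝ⁺ has weak specification at scale δ for all orbit segments of length > T_0 with maximum gap size τ, and φ has the Bowen property at scale ε on G. Then for every γ ∈ I_δ = [4·L_X·δ, 100·L_X·δ] there is a constant C_1 > 0 such that for every k ∈ ℕ, all t_1,…,t_k ≥ T_0, setting T = Σ_{i=1}^k t_i + (k−1)τ, and every 0 < θ < γ/2 − δ, one has ∏_{j=1}^k Λ(G, γ, 0, t_j) ≤ C_1^k · Λ(M×ℝ⁺, θ, 0, T). -/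
open MeasureTheory Filter Set

set_option linter.unusedSectionVars false

section MyAuxAll
variable {M : Type*} [MetricSpace M]


lemma flowCont {φ : ℝ → M → M} (hcont : Continuous fun q : ℝ × M => φ q.1 q.2) (y : M) :
    Continuous fun s => φ s y := hcont.comp (continuous_id.prodMk continuous_const)

lemma bowen_bdd {φ : ℝ → M → M} (hcont : Continuous fun q : ℝ × M => φ q.1 q.2)
    (t : ℝ) (x y : M) : BddAbove ((fun s => dist (φ s x) (φ s y)) '' Set.Icc 0 t) :=
  (isCompact_Icc.image ((flowCont hcont x).dist (flowCont hcont y))).bddAbove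

lemma dist_le_bowen {φ : ℝ → M → M} (hcont : Continuous fun q : ℝ × M => φ q.1 q.2)
    {t s : ℝ} (hs : s ∈ Set.Icc 0 t) (x y : M) :
    dist (φ s x) (φ s y) ≤ bowenDist φ t x y :=
  le_csSup (bowen_bdd hcont t x y) (Set.mem_image_of_mem _ hs)

lemma bowen_symm (φ : ℝ → M → M) (t : ℝ) (x y : M) : bowenDist φ t x y = bowenDist φ t y x := by
  unfold bowenDist; simp_rw [dist_comm]

lemma exists_big {φ : ℝ → M → M} {t γ : ℝ} (ht : 0 ≤ t) {x y : M}
    (h : γ < bowenDist φ t x y) : ∃ s ∈ Set.Icc 0 t, γ < dist (φ s x) (φ s y) := by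
  obtain ⟨r, hr, hlt⟩ := exists_lt_of_lt_csSup ((Set.nonempty_Icc.mpr ht).image _) h
  obtain ⟨s, hs, rfl⟩ := hr
  exact ⟨s, hs, hlt⟩

lemma potFlowCont {φ : ℝ → M → M} (hcont : Continuous fun q : ℝ × M => φ q.1 q.2)
    {pot : M → ℝ} (hpot : Continuous pot) (y : M) :
    Continuous fun s => pot (φ s y) := hpot.comp (flowCont hcont y)

lemma birk_shift {φ : ℝ → M → M} (hadd : ∀ u v x, φ (u + v) x = φ u (φ v x))
    (pot : M → ℝ) (a t : ℝ) (y : M) :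
    ∫ s in a..(a+t), pot (φ s y) = birkhoff φ pot (φ a y) t := by
  unfold birkhoff
  have h : ∀ u : ℝ, pot (φ u (φ a y)) = pot (φ (a + u) y) := fun u => by rw [← hadd, add_comm]
  simp_rw [h]
  rw [intervalIntegral.integral_comp_add_left (fun s => pot (φ s y)) a, add_zero]

lemma birk_abs {φ : ℝ → M → M} {pot : M → ℝ} {P : ℝ} (hP : ∀ x, |pot x| ≤ P)
    (a b : ℝ) (y : M) : |∫ s in a..b, pot (φ s y)| ≤ P * |b - a| := by
  have h := intervalIntegral.norm_integral_le_of_norm_le_const (a := a) (b := b) (C := P)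
    (f := fun s => pot (φ s y)) (fun x _ => by simpa using hP (φ x y))
  simpa using h

lemma prod_sSup_le {ι : Type*} [DecidableEq ι] (s : Finset ι) :
    ∀ (S : ι → Set ℝ) (B : ℝ), (∀ j ∈ s, (0:ℝ) ∈ S j) → (∀ j ∈ s, ∀ r ∈ S j, 0 ≤ r) →
    (∀ r : ι → ℝ, (∀ j ∈ s, r j ∈ S j) → ∏ j ∈ s, r j ≤ B) →
    ∏ j ∈ s, sSup (S j) ≤ B := by
  induction s using Finset.induction_on with
  | empty => intro S B _ _ hB; simpa using hB 0 (by simp)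
  | @insert a s ha ih =>
    intro S B h0 hnn hB
    have h0' : ∀ j ∈ s, (0:ℝ) ∈ S j := fun j hj => h0 j (Finset.mem_insert_of_mem hj)
    have hnn' : ∀ j ∈ s, ∀ r ∈ S j, 0 ≤ r := fun j hj => hnn j (Finset.mem_insert_of_mem hj)
    have hBnn : 0 ≤ B := by
      have := hB (fun _ => 0) (fun j hj => by
        rcases Finset.mem_insert.1 hj with rfl | hj
        · exact h0 j (Finset.mem_insert_self j s)
        · exact h0' j hj)
      simpa [Finset.prod_eq_zero (Finset.mem_insert_self a s)] using this
    rw [Finset.prod_insert ha]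
    have hQnn : 0 ≤ ∏ j ∈ s, sSup (S j) :=
      Finset.prod_nonneg fun j hj => Real.sSup_nonneg (hnn' j hj)
    rcases hQnn.lt_or_eq with hQ | hQ
    · rw [← le_div_iff₀ hQ]
      apply Real.sSup_le _ (div_nonneg hBnn hQnn)
      intro x hx
      have hx0 : 0 ≤ x := hnn a (Finset.mem_insert_self a s) x hx
      rw [le_div_iff₀ hQ]
      rcases hx0.lt_or_eq with hx0' | hx0'
      · have hle : ∏ j ∈ s, sSup (S j) ≤ B / x := by
          apply ih S (B / x) h0' hnn'
          intro r hr
          rw [le_div_iff₀' hx0']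
          have hmem : ∀ j ∈ insert a s, (Function.update r a x) j ∈ S j := by
            intro j hj
            rcases Finset.mem_insert.1 hj with rfl | hj'
            · simpa using hx
            · rw [Function.update_of_ne (ne_of_mem_of_not_mem hj' ha)]
              exact hr j hj'
          have := hB _ hmem
          rwa [Finset.prod_insert ha, Function.update_self,
            Finset.prod_congr rfl (fun j hj => Function.update_of_ne (ne_of_mem_of_not_mem hj ha) x r)] at this
        calc x * ∏ j ∈ s, sSup (S j) ≤ x * (B / x) := by
              exact mul_le_mul_of_nonneg_left hle hx0
          _ = B := by field_simp
      · rw [← hx0', zero_mul]; exact hBnn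
    · rw [← hQ, mul_zero]; exact hBnn

lemma floor_add_le (a b : ℝ) : ⌊a + b⌋ ≤ ⌊a⌋ + ⌊b⌋ + 1 := by
  have h1 := Int.lt_floor_add_one a
  have h2 := Int.lt_floor_add_one b
  have : (a + b : ℝ) < ((⌊a⌋ + ⌊b⌋ + 1 : ℤ) : ℝ) + 1 := by push_cast; linarith
  exact_mod_cast Int.lt_add_one_iff.mp (Int.floor_lt.mpr (by push_cast; linarith))

lemma sum_Iio_fin {k : ℕ} (j : Fin k) (F : Fin k → ℝ) (G : ℕ → ℝ)
    (hFG : ∀ i : Fin k, F i = G i) :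
    ∑ i ∈ Finset.Iio j, F i = ∑ i ∈ Finset.range (j : ℕ), G i := by
  rw [← Nat.Iio_eq_range, ← Fin.map_valEmbedding_Iio, Finset.sum_map]
  exact Finset.sum_congr rfl fun i _ => hFG i

lemma sum_Iic_fin {k : ℕ} (j : Fin k) (F : Fin k → ℝ) (G : ℕ → ℝ)
    (hFG : ∀ i : Fin k, F i = G i) :
    ∑ i ∈ Finset.Iic j, F i = ∑ i ∈ Finset.range ((j : ℕ) + 1), G i := by
  have : Finset.range ((j:ℕ)+1) = Finset.Iic (j:ℕ) := by
    ext i; simp [Nat.lt_succ_iff]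
  rw [this, ← Fin.map_valEmbedding_Iic, Finset.sum_map]
  exact Finset.sum_congr rfl fun i _ => hFG i



lemma birk_le {φ : ℝ → M → M} {pot : M → ℝ} {P : ℝ} (hP : ∀ x, |pot x| ≤ P)
    {t : ℝ} (ht : 0 ≤ t) (y : M) : birkhoff φ pot y t ≤ P * t := by
  have h := intervalIntegral.norm_integral_le_of_norm_le_const (a := (0:ℝ)) (b := t) (C := P)
    (f := fun s => pot (φ s y)) (fun x _ => by simpa using hP (φ x y))
  rw [Real.norm_eq_abs] at h
  have := abs_le.mp h
  calc birkhoff φ pot y t ≤ P * |t - 0| := this.2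
    _ = P * t := by rw [sub_zero, abs_of_nonneg ht]

/-- Boundedness of the set defining the partition function, for positive scale. -/
lemma partFn_set_bddAbove [CompactSpace M] {φ : ℝ → M → M}
    (hcont : Continuous fun q : ℝ × M => φ q.1 q.2)
    {pot : M → ℝ} {P : ℝ} (hP : ∀ x, |pot x| ≤ P)
    (C : Set (M × ℝ)) {θ t : ℝ} (hθ : 0 < θ) (ht : 0 ≤ t) :
    BddAbove {r : ℝ | ∃ E : Finset M, (↑E : Set M) ⊆ {x | (x, t) ∈ C} ∧
      IsSeparatedSet φ t θ (↑E : Set M) ∧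
      r = ∑ x ∈ E, Real.exp (birkhoff φ pot x t)} := by
  classical
  -- uniform continuity on [0,t] × M
  have hK : IsCompact ((Set.Icc (0:ℝ) t) ×ˢ (Set.univ : Set M)) :=
    isCompact_Icc.prod isCompact_univ
  have hUC := hK.uniformContinuousOn_of_continuous
    (hcont.continuousOn : ContinuousOn (fun q : ℝ × M => φ q.1 q.2) _)
  rw [Metric.uniformContinuousOn_iff] at hUC
  obtain ⟨η, hη0, hη⟩ := hUC θ hθ
  -- finite cover by balls of radius η/2
  obtain ⟨Cs, -, hCsfin, hCscov⟩ := finite_cover_balls_of_compact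
    (isCompact_univ : IsCompact (Set.univ : Set M)) (half_pos hη0)
  refine ⟨(hCsfin.toFinset.card : ℝ) * Real.exp (P * t), ?_⟩
  rintro r ⟨E, -, hEsep, rfl⟩
  -- each point of E assigned a center
  have hcen : ∀ x : M, ∃ c, c ∈ hCsfin.toFinset ∧ x ∈ Metric.ball c (η/2) := by
    intro x
    have := hCscov (Set.mem_univ x)
    simp only [Set.mem_iUnion] at this
    obtain ⟨c, hc, hxc⟩ := this
    exact ⟨c, hCsfin.mem_toFinset.mpr hc, hxc⟩
  choose cen hcen1 hcen2 using hcen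
  have hcard : E.card ≤ hCsfin.toFinset.card := by
    apply Finset.card_le_card_of_injOn cen (fun x _ => hcen1 x)
    intro x hx x' hx' hxx'
    by_contra hne
    have hsep := hEsep hx hx' hne
    have hd : dist x x' < η := by
      have h1 := hcen2 x; have h2 := hcen2 x'
      rw [Metric.mem_ball] at h1 h2
      have h2' : dist (cen x) x' < η/2 := by rw [hxx', dist_comm]; exact h2
      calc dist x x' ≤ dist x (cen x) + dist (cen x) x' := dist_triangle _ _ _
        _ < η/2 + η/2 := add_lt_add h1 h2'
        _ = η := by ring
    have hbow : bowenDist φ t x x' ≤ θ := by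
      apply Real.sSup_le _ hθ.le
      rintro r ⟨s, hs, rfl⟩
      have := hη (s, x) ⟨hs, Set.mem_univ x⟩ (s, x') ⟨hs, Set.mem_univ x'⟩
        (by rw [Prod.dist_eq]; simpa [dist_self, hη0] using hd)
      exact this.le
    linarith
  calc ∑ x ∈ E, Real.exp (birkhoff φ pot x t)
      ≤ ∑ _x ∈ E, Real.exp (P * t) :=
        Finset.sum_le_sum fun x _ => Real.exp_le_exp.mpr (birk_le hP ht x)
    _ = (E.card : ℝ) * Real.exp (P * t) := by rw [Finset.sum_const, nsmul_eq_mul]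
    _ ≤ _ := by
        apply mul_le_mul_of_nonneg_right _ (Real.exp_nonneg _)
        exact_mod_cast hcard

/-- flow is near identity for small nonnegative times -/
lemma small_time [CompactSpace M] {φ : ℝ → M → M}
    (hcont : Continuous fun q : ℝ × M => φ q.1 q.2)
    (hid : ∀ x, φ 0 x = x) {c : ℝ} (hc : 0 < c) :
    ∃ η : ℝ, 0 < η ∧ η ≤ 1 ∧ ∀ (z : M) (Δ : ℝ), 0 ≤ Δ → Δ ≤ η → dist (φ Δ z) z ≤ c := by
  have hopen : IsOpen {q : ℝ × M | dist (φ q.1 q.2) q.2 < c} :=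
    isOpen_lt (hcont.dist continuous_snd) continuous_const
  have hsub : ({0} : Set ℝ) ×ˢ (Set.univ : Set M) ⊆ {q : ℝ × M | dist (φ q.1 q.2) q.2 < c} := by
    rintro ⟨s, z⟩ ⟨hs, -⟩
    simp only [Set.mem_singleton_iff] at hs
    simp [Set.mem_setOf_eq, hs, hid, hc]
  obtain ⟨u, v, hu, -, h0u, hvuniv, huv⟩ :=
    generalized_tube_lemma isCompact_singleton isCompact_univ hopen hsub
  obtain ⟨r, hr0, hball⟩ := Metric.isOpen_iff.mp hu 0 (h0u rfl)
  refine ⟨min (r/2) 1, by positivity, min_le_right _ _, ?_⟩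
  intro z Δ hΔ0 hΔ
  have hΔu : Δ ∈ u := by
    apply hball
    rw [Metric.mem_ball, Real.dist_eq, sub_zero, abs_of_nonneg hΔ0]
    have : Δ ≤ r/2 := le_trans hΔ (min_le_left _ _)
    linarith
  have : (Δ, z) ∈ {q : ℝ × M | dist (φ q.1 q.2) q.2 < c} :=
    huv ⟨hΔu, hvuniv (Set.mem_univ z)⟩
  exact le_of_lt this


end MyAuxAll

set_option maxHeartbeats 2000000 in
/-- Gluing estimate (CT Proposition 4.3). If G has weak specification
at scale δ for orbit segments of length ≥ T₀ with maximum gap size τ, and the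
potential has the Bowen property at scale ε = 1000·L_X·δ on G, then for every
γ ∈ I_δ there is C₁ > 0 with
∏_j Λ(G, γ, 0, t_j) ≤ C₁^k · Λ(M×ℝ⁺, θ, 0, T) for T = Σ t_i + (k−1)τ and
every 0 < θ < γ/2 − δ. -/
theorem prod_partFn_le
    {M : Type*} [MetricSpace M] [CompactSpace M]
    (φ : ℝ → M → M)
    (hcont : Continuous fun q : ℝ × M => φ q.1 q.2)
    (hid : ∀ x, φ 0 x = x)
    (hadd : ∀ u v x, φ (u + v) x = φ u (φ v x))
    (L : ℝ) (hL : 1 ≤ L)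
    (hLip : ∀ t ∈ Set.Icc (0:ℝ) 1, LipschitzWith (Real.toNNReal L) (φ t))
    (pot : M → ℝ) (hpot : Continuous pot)
    (δ ε : ℝ) (hδ : 0 < δ) (hε : ε = 1000 * L * δ)
    (GG : Set (M × ℝ))
    (T₀ τ : ℝ) (hT₀ : 0 < T₀) (hτ : 0 ≤ τ)
    (hspec : HasWeakSpec φ (GG ∩ {xt | T₀ ≤ xt.2}) δ τ)
    (hbowen : HasBowenProp φ pot GG ε) :
    ∀ γ ∈ Set.Icc (4 * L * δ) (100 * L * δ), ∃ C₁ > (0:ℝ),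
      ∀ (k : ℕ), 1 ≤ k → ∀ ts : Fin k → ℝ, (∀ i, T₀ ≤ ts i) →
        ∀ θ : ℝ, 0 < θ → θ < γ / 2 - δ →
          (∏ j, partFn φ pot GG γ 0 (ts j)) ≤
            C₁ ^ k * partFn φ pot Set.univ θ 0 ((∑ i, ts i) + ((k : ℝ) - 1) * τ) := by
  classical
  intro γ hγ
  obtain ⟨K, hK, hbow⟩ := hbowen
  have hLpos : (0:ℝ) < L := lt_of_lt_of_le one_pos hL
  have hδε : δ < ε := by nlinarith
  obtain ⟨P, hP0, hP⟩ : ∃ P : ℝ, 0 ≤ P ∧ ∀ x : M, |pot x| ≤ P := by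
    rcases isEmpty_or_nonempty M with hM | hM
    · exact ⟨0, le_rfl, fun x => (IsEmpty.false x).elim⟩
    · obtain ⟨x₀, -, hx₀⟩ := isCompact_univ.exists_isMaxOn Set.univ_nonempty
        (continuous_abs.comp hpot).continuousOn
      exact ⟨|pot x₀|, abs_nonneg _, fun x => hx₀ (Set.mem_univ x)⟩
  obtain ⟨η, hη0, hη1, hηp⟩ := small_time hcont hid (show (0:ℝ) < δ/2 by linarith)
  have hfl0 : (0:ℤ) ≤ ⌊τ/η⌋ := Int.floor_nonneg.mpr (div_nonneg hτ hη0.le)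
  set A : ℕ := (⌊τ/η⌋ + 2).toNat with hAdef
  have hAz : (A : ℤ) = ⌊τ/η⌋ + 2 := Int.toNat_of_nonneg (by omega)
  have hA1 : 1 ≤ A := by omega
  have hApos : (0:ℝ) < (A:ℝ) := by exact_mod_cast Nat.lt_of_lt_of_le Nat.zero_lt_one hA1
  refine ⟨(A : ℝ) * Real.exp (K + τ * P), mul_pos hApos (Real.exp_pos _), ?_⟩
  intro k hk ts hts θ hθ0 hθγ
  set T : ℝ := (∑ i, ts i) + ((k:ℝ) - 1) * τ with hTdef
  have htpos : ∀ i, 0 < ts i := fun i => lt_of_lt_of_le hT₀ (hts i)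
  have hsumts : (k:ℝ) * T₀ ≤ ∑ i, ts i := by
    calc (k:ℝ) * T₀ = ∑ _i : Fin k, T₀ := by
          rw [Finset.sum_const, Finset.card_univ, Fintype.card_fin, nsmul_eq_mul]
      _ ≤ ∑ i, ts i := Finset.sum_le_sum fun i _ => hts i
  have hk1 : (1:ℝ) ≤ (k:ℝ) := by exact_mod_cast hk
  have hTpos : 0 < T := by nlinarith
  have hPhi0 : ∀ (x : M) (t : ℝ), PhiSup φ pot 0 x t = birkhoff φ pot x t :=
    fun x t => if_pos rfl
  have hbdd : BddAbove {r : ℝ | ∃ E : Finset M,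
      (↑E : Set M) ⊆ {x | (x, T) ∈ (Set.univ : Set (M × ℝ))} ∧
      IsSeparatedSet φ T θ (↑E : Set M) ∧
      r = ∑ x ∈ E, Real.exp (PhiSup φ pot 0 x T)} := by
    simp_rw [hPhi0]
    exact partFn_set_bddAbove hcont hP _ hθ0 hTpos.le
  have hΛ0 : 0 ≤ partFn φ pot (Set.univ : Set (M × ℝ)) θ 0 T := by
    apply le_csSup hbdd
    exact ⟨∅, by simp, by intro x hx; simp at hx, by simp⟩
  -- the sets whose sups are the factors on the left
  set SGG : Fin k → Set ℝ := fun j => {r : ℝ | ∃ E : Finset M,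
      (↑E : Set M) ⊆ {x | (x, ts j) ∈ GG} ∧ IsSeparatedSet φ (ts j) γ (↑E : Set M) ∧
      r = ∑ x ∈ E, Real.exp (PhiSup φ pot 0 x (ts j))} with hSGG
  have key : ∀ r : Fin k → ℝ, (∀ j ∈ Finset.univ, r j ∈ SGG j) →
      ∏ j, r j ≤ ((A:ℝ) * Real.exp (K + τ * P))^k *
        partFn φ pot (Set.univ : Set (M × ℝ)) θ 0 T := by
    intro r hr
    have hrj := fun j => hr j (Finset.mem_univ j)
    simp only [hSGG, Set.mem_setOf_eq] at hrj
    choose E hEsub hEsep hEr using hrj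
    -- rewrite the product as a sum over tuples
    have hprod : ∏ j, r j = ∑ f ∈ Fintype.piFinset E,
        Real.exp (∑ j, birkhoff φ pot (f j) (ts j)) := by
      calc ∏ j, r j = ∏ j, ∑ x ∈ E j, Real.exp (birkhoff φ pot x (ts j)) := by
            refine Finset.prod_congr rfl fun j _ => ?_
            rw [hEr j]
            exact Finset.sum_congr rfl fun x _ => by rw [hPhi0]
        _ = ∑ f ∈ Fintype.piFinset E, ∏ j, Real.exp (birkhoff φ pot (f j) (ts j)) :=
            Finset.prod_univ_sum E _
        _ = ∑ f ∈ Fintype.piFinset E, Real.exp (∑ j, birkhoff φ pot (f j) (ts j)) :=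
            Finset.sum_congr rfl fun f _ => (Real.exp_sum _ _).symm
    rw [hprod]
    -- choose specification points for each tuple
    have hspec' : ∀ f : Fin k → M, ∃ (y : M) (gap : Fin k → ℝ),
        (∀ j, f j ∈ E j) →
        (∀ i, gap i ∈ Set.Icc (0:ℝ) τ) ∧ (∀ i : Fin k, (i:ℕ) = 0 → gap i = 0) ∧
        ∀ j : Fin k, bowenDist φ (ts j)
          (φ ((∑ i ∈ Finset.Iio j, ts i) + ∑ i ∈ Finset.Iic j, gap i) y) (f j) < δ := by
      intro f
      by_cases hf : ∀ j, f j ∈ E j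
      · obtain ⟨y, gap, h1, h2, h3⟩ := hspec k f ts (fun i => ⟨hEsub i (hf i), hts i⟩)
        exact ⟨y, gap, fun _ => ⟨h1, h2, h3⟩⟩
      · exact ⟨f ⟨0, hk⟩, fun _ => 0, fun h => absurd h hf⟩
    choose yy gg hgg using hspec'
    -- natural-number indexed data
    set tN : ℕ → ℝ := fun i => if h : i < k then ts ⟨i, h⟩ else 0 with htNdef
    have htN : ∀ i : Fin k, ts i = tN (i : ℕ) := fun i => by
      simp only [htNdef, Fin.is_lt, dif_pos, Fin.eta]
    have htN0 : ∀ i, 0 ≤ tN i := by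
      intro i; simp only [htNdef]; split
      · exact (htpos _).le
      · exact le_rfl
    have htNsum : ∑ i ∈ Finset.range k, tN i = ∑ i, ts i := by
      rw [← Fin.sum_univ_eq_sum_range]
      exact Finset.sum_congr rfl fun i _ => (htN i).symm
    set gN : (Fin k → M) → ℕ → ℝ := fun f i => if h : i < k then gg f ⟨i, h⟩ else 0 with hgNdef
    have hgN : ∀ f (i : Fin k), gg f i = gN f (i : ℕ) := fun f i => by
      simp only [hgNdef, Fin.is_lt, dif_pos, Fin.eta]
    set aN : (Fin k → M) → ℕ → ℝ := fun f j =>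
      (∑ i ∈ Finset.range j, tN i) + ∑ i ∈ Finset.range (j+1), gN f i with haNdef
    -- facts for good tuples
    have hgNnn : ∀ f, (∀ j, f j ∈ E j) → ∀ i, 0 ≤ gN f i := by
      intro f hf i
      simp only [hgNdef]; split
      · exact ((hgg f hf).1 _).1
      · exact le_rfl
    have hgNτ : ∀ f, (∀ j, f j ∈ E j) → ∀ i, gN f i ≤ τ := by
      intro f hf i
      simp only [hgNdef]; split
      · exact ((hgg f hf).1 _).2
      · exact hτ
    have hgN0 : ∀ f, (∀ j, f j ∈ E j) → gN f 0 = 0 := by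
      intro f hf
      simp only [hgNdef]
      rw [dif_pos (show 0 < k from hk)]
      exact (hgg f hf).2.1 _ rfl
    have hsumgN : ∀ f, (∀ j, f j ∈ E j) → ∀ n, n ≤ k →
        ∑ i ∈ Finset.range n, gN f i ≤ ((k:ℝ) - 1) * τ := by
      intro f hf n hn
      have h1 : ∑ i ∈ Finset.range n, gN f i ≤ ∑ i ∈ Finset.range k, gN f i :=
        Finset.sum_le_sum_of_subset_of_nonneg (Finset.range_subset_range.mpr hn)
          (fun i _ _ => hgNnn f hf i)
      have h2 : ∑ i ∈ Finset.range k, gN f i ≤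
          ∑ i ∈ Finset.range k, (if i = 0 then (0:ℝ) else τ) := by
        apply Finset.sum_le_sum
        intro i _
        by_cases hi : i = 0
        · rw [if_pos hi, hi, hgN0 f hf]
        · rw [if_neg hi]; exact hgNτ f hf i
      have h3 : ∑ i ∈ Finset.range k, (if i = 0 then (0:ℝ) else τ) = (k:ℝ) * τ - τ := by
        have : ∀ i : ℕ, (if i = 0 then (0:ℝ) else τ) = τ - (if i = 0 then τ else 0) := by
          intro i; split_ifs <;> ring
        simp_rw [this]
        rw [Finset.sum_sub_distrib, Finset.sum_const, Finset.card_range, nsmul_eq_mul,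
          Finset.sum_ite_eq' (Finset.range k) 0 (fun _ => τ),
          if_pos (Finset.mem_range.mpr (show 0 < k from hk))]
      linarith
    have haN0 : ∀ f, (∀ j, f j ∈ E j) → aN f 0 = 0 := by
      intro f hf
      simp only [haNdef, Finset.range_zero, Finset.sum_empty, Finset.range_one,
        Finset.sum_singleton, zero_add]
      exact hgN0 f hf
    have haNsucc : ∀ f n, aN f (n+1) = aN f n + tN n + gN f (n+1) := by
      intro f n
      simp only [haNdef]
      rw [Finset.sum_range_succ (f := tN), Finset.sum_range_succ (f := gN f)]
      ring
    have haNnn : ∀ f, (∀ j, f j ∈ E j) → ∀ n, 0 ≤ aN f n := by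
      intro f hf n
      simp only [haNdef]
      have h1 : 0 ≤ ∑ i ∈ Finset.range n, tN i := Finset.sum_nonneg fun i _ => htN0 i
      have h2 : 0 ≤ ∑ i ∈ Finset.range (n+1), gN f i :=
        Finset.sum_nonneg fun i _ => hgNnn f hf i
      linarith
    have haNT : ∀ f, (∀ j, f j ∈ E j) → ∀ j : Fin k, aN f (j:ℕ) + ts j ≤ T := by
      intro f hf j
      have h1 : aN f (j:ℕ) + ts j
          = (∑ i ∈ Finset.range ((j:ℕ)+1), tN i) + ∑ i ∈ Finset.range ((j:ℕ)+1), gN f i := by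
        rw [Finset.sum_range_succ (f := tN), htN j]
        simp only [haNdef]; ring
      have h2 : ∑ i ∈ Finset.range ((j:ℕ)+1), tN i ≤ ∑ i ∈ Finset.range k, tN i :=
        Finset.sum_le_sum_of_subset_of_nonneg (Finset.range_subset_range.mpr j.isLt)
          (fun i _ _ => htN0 i)
      have h3 := hsumgN f hf ((j:ℕ)+1) j.isLt
      rw [hTdef, ← htNsum]
      linarith
    have haNkT : ∀ f, (∀ j, f j ∈ E j) → aN f k ≤ T := by
      intro f hf
      have h1 : gN f k = 0 := by simp only [hgNdef]; rw [dif_neg (lt_irrefl k)]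
      have h2 : aN f k = (∑ i ∈ Finset.range k, tN i) + ∑ i ∈ Finset.range k, gN f i := by
        simp only [haNdef]
        rw [Finset.sum_range_succ (f := gN f), h1, add_zero]
      have h3 := hsumgN f hf k le_rfl
      rw [hTdef, ← htNsum]
      linarith
    -- shadowing in terms of aN
    have hshadowN : ∀ f, (∀ j, f j ∈ E j) → ∀ j : Fin k,
        bowenDist φ (ts j) (φ (aN f (j:ℕ)) (yy f)) (f j) < δ := by
      intro f hf j
      have h := (hgg f hf).2.2 j
      have e1 : (∑ i ∈ Finset.Iio j, ts i) + ∑ i ∈ Finset.Iic j, gg f i = aN f (j:ℕ) := by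
        rw [sum_Iio_fin j ts tN htN, sum_Iic_fin j (gg f) (gN f) (hgN f)]
      rwa [e1] at h
    -- Birkhoff sum estimate
    have hbirkT : ∀ f, (∀ j, f j ∈ E j) →
        ∑ j, birkhoff φ pot (f j) (ts j) ≤ birkhoff φ pot (yy f) T + (k:ℝ)*(K + τ*P) := by
      intro f hf
      have hcontY : Continuous fun s => pot (φ s (yy f)) := potFlowCont hcont hpot (yy f)
      have hint : ∀ a b : ℝ, IntervalIntegrable (fun s => pot (φ s (yy f)))
          MeasureTheory.volume a b := fun a b => hcontY.intervalIntegrable a b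
      have hstep1 : ∀ j : Fin k, birkhoff φ pot (f j) (ts j)
          ≤ birkhoff φ pot (φ (aN f (j:ℕ)) (yy f)) (ts j) + K := by
        intro j
        have hball : φ (aN f (j:ℕ)) (yy f) ∈ bowenBall φ (ts j) ε (f j) := by
          show bowenDist φ (ts j) (f j) (φ (aN f (j:ℕ)) (yy f)) < ε
          rw [bowen_symm]
          exact lt_trans (hshadowN f hf j) hδε
        have h1 := hbow (hEsub j (hf j)) _ hball
        have h2 := abs_le.mp h1
        linarith [h2.1]
      have claim : ∀ n, n ≤ k →
          ∑ i ∈ Finset.range n, birkhoff φ pot (φ (aN f i) (yy f)) (tN i)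
          ≤ (∫ s in (0:ℝ)..(aN f n), pot (φ s (yy f)))
            + P * (aN f n - ∑ i ∈ Finset.range n, tN i) := by
        intro n
        induction n with
        | zero =>
          intro _
          simp [haN0 f hf]
        | succ n ih =>
          intro hn
          have hih := ih (Nat.le_of_succ_le hn)
          have hgnn := hgNnn f hf (n+1)
          have hsucc := haNsucc f n
          have hsplit1 : ∫ s in (0:ℝ)..(aN f n + tN n), pot (φ s (yy f))
              = (∫ s in (0:ℝ)..(aN f n), pot (φ s (yy f)))
                + ∫ s in (aN f n)..(aN f n + tN n), pot (φ s (yy f)) :=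
            (intervalIntegral.integral_add_adjacent_intervals (hint _ _) (hint _ _)).symm
          have hsplit2 : ∫ s in (0:ℝ)..(aN f (n+1)), pot (φ s (yy f))
              = (∫ s in (0:ℝ)..(aN f n + tN n), pot (φ s (yy f)))
                + ∫ s in (aN f n + tN n)..(aN f (n+1)), pot (φ s (yy f)) :=
            (intervalIntegral.integral_add_adjacent_intervals (hint _ _) (hint _ _)).symm
          have hwin : ∫ s in (aN f n)..(aN f n + tN n), pot (φ s (yy f))
              = birkhoff φ pot (φ (aN f n) (yy f)) (tN n) := birk_shift hadd pot _ _ _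
          have hgap : -(P * gN f (n+1))
              ≤ ∫ s in (aN f n + tN n)..(aN f (n+1)), pot (φ s (yy f)) := by
            have habs := birk_abs (φ := φ) hP (aN f n + tN n) (aN f (n+1)) (yy f)
            have he : |aN f (n+1) - (aN f n + tN n)| = gN f (n+1) := by
              rw [hsucc, abs_of_nonneg] <;> [ring; linarith]
            rw [he] at habs
            have h5 := abs_le.mp habs
            linarith [h5.1]
          rw [Finset.sum_range_succ, Finset.sum_range_succ (f := tN)]
          rw [hsplit2, hsplit1, hwin]
          have harith : P * (aN f (n+1) - (∑ i ∈ Finset.range n, tN i + tN n))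
              = P * (aN f n - ∑ i ∈ Finset.range n, tN i) + P * gN f (n+1) := by
            rw [hsucc]; ring
          linarith
      have hck := claim k le_rfl
      have htail : -(P * (T - aN f k)) ≤ ∫ s in (aN f k)..T, pot (φ s (yy f)) := by
        have habs := birk_abs (φ := φ) hP (aN f k) T (yy f)
        have he : |T - aN f k| = T - aN f k := abs_of_nonneg (by linarith [haNkT f hf])
        rw [he] at habs
        have h5 := abs_le.mp habs
        linarith [h5.1]
      have hTsplit : birkhoff φ pot (yy f) T
          = (∫ s in (0:ℝ)..(aN f k), pot (φ s (yy f)))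
            + ∫ s in (aN f k)..T, pot (φ s (yy f)) :=
        (intervalIntegral.integral_add_adjacent_intervals (hint _ _) (hint _ _)).symm
      have hslack : aN f k - ∑ i ∈ Finset.range k, tN i ≤ ((k:ℝ)-1)*τ := by
        have h1 : gN f k = 0 := by simp only [hgNdef]; rw [dif_neg (lt_irrefl k)]
        have h2 : aN f k = (∑ i ∈ Finset.range k, tN i) + ∑ i ∈ Finset.range k, gN f i := by
          simp only [haNdef]; rw [Finset.sum_range_succ (f := gN f), h1, add_zero]
        have h3 := hsumgN f hf k le_rfl
        linarith
      have hconv1 : ∑ j : Fin k, birkhoff φ pot (φ (aN f (j:ℕ)) (yy f)) (ts j)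
          = ∑ i ∈ Finset.range k, birkhoff φ pot (φ (aN f i) (yy f)) (tN i) := by
        rw [← Fin.sum_univ_eq_sum_range (fun i => birkhoff φ pot (φ (aN f i) (yy f)) (tN i)) k]
        exact Finset.sum_congr rfl fun j _ => by rw [htN j]
      have hsum1 : ∑ j, birkhoff φ pot (f j) (ts j)
          ≤ (∑ j : Fin k, birkhoff φ pot (φ (aN f (j:ℕ)) (yy f)) (ts j)) + (k:ℝ)*K := by
        calc ∑ j, birkhoff φ pot (f j) (ts j)
            ≤ ∑ j : Fin k, (birkhoff φ pot (φ (aN f (j:ℕ)) (yy f)) (ts j) + K) :=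
              Finset.sum_le_sum fun j _ => hstep1 j
          _ = (∑ j : Fin k, birkhoff φ pot (φ (aN f (j:ℕ)) (yy f)) (ts j)) + (k:ℝ)*K := by
              rw [Finset.sum_add_distrib, Finset.sum_const, Finset.card_univ,
                Fintype.card_fin, nsmul_eq_mul]
      have hTgap : T - ∑ i ∈ Finset.range k, tN i = ((k:ℝ)-1)*τ := by
        rw [htNsum, hTdef]; ring
      have hPτ : 0 ≤ P*τ := mul_nonneg hP0 hτ
      have hfinal1 : P * (T - aN f k) + P * (aN f k - ∑ i ∈ Finset.range k, tN i)
          = P * (T - ∑ i ∈ Finset.range k, tN i) := by ring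
      have hfinal2 : P * (T - ∑ i ∈ Finset.range k, tN i) ≤ (k:ℝ)*(τ*P) := by
        rw [hTgap]
        nlinarith
      rw [hconv1] at hsum1
      have hI2 : (∫ s in (0:ℝ)..(aN f k), pot (φ s (yy f)))
          ≤ birkhoff φ pot (yy f) T + P * (T - aN f k) := by
        rw [hTsplit]
        linarith
      have hexp : (k:ℝ)*(K + τ*P) = (k:ℝ)*K + (k:ℝ)*(τ*P) := by ring
      linarith [hck, hsum1, hI2, hfinal1, hfinal2]
    -- class functions
    set clsN : (Fin k → M) → ℕ → ℤ :=
      fun f j => ⌊(∑ i ∈ Finset.range (j+1), gN f i) / η⌋ with hclsNdef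
    set inc : (Fin k → M) → Fin k → ℤ :=
      fun f j => clsN f (j:ℕ) - (if (j:ℕ) = 0 then 0 else clsN f ((j:ℕ) - 1)) with hincdef
    have hincmem : ∀ f, (∀ j, f j ∈ E j) → ∀ j : Fin k,
        inc f j ∈ Finset.Icc (0:ℤ) (⌊τ/η⌋ + 1) := by
      intro f hf j
      have hcls0 : clsN f 0 = 0 := by
        simp only [hclsNdef]
        rw [Finset.range_one, Finset.sum_singleton, hgN0 f hf, zero_div, Int.floor_zero]
      rcases Nat.eq_zero_or_pos (j:ℕ) with hj0 | hjpos
      · have he : inc f j = 0 := by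
          simp only [hincdef]
          rw [hj0, if_pos rfl, hcls0, sub_zero]
        rw [he, Finset.mem_Icc]
        omega
      · obtain ⟨n, hn⟩ : ∃ n, (j:ℕ) = n + 1 := ⟨(j:ℕ) - 1, by omega⟩
        have he : inc f j = clsN f (n+1) - clsN f n := by
          simp only [hincdef]
          rw [hn, if_neg (Nat.succ_ne_zero n), Nat.add_sub_cancel]
        have hBsucc : ∑ i ∈ Finset.range (n+1+1), gN f i
            = (∑ i ∈ Finset.range (n+1), gN f i) + gN f (n+1) := Finset.sum_range_succ _ _
        have hg1 : 0 ≤ gN f (n+1) := hgNnn f hf _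
        have hg2 : gN f (n+1) ≤ τ := hgNτ f hf _
        have hlow : clsN f n ≤ clsN f (n+1) := by
          simp only [hclsNdef]
          apply Int.floor_le_floor
          apply (div_le_div_iff_of_pos_right hη0).mpr
          rw [hBsucc]
          linarith
        have hup : clsN f (n+1) ≤ clsN f n + ⌊τ/η⌋ + 1 := by
          have h1 : (∑ i ∈ Finset.range (n+1+1), gN f i)/η
              ≤ (∑ i ∈ Finset.range (n+1), gN f i)/η + τ/η := by
            rw [hBsucc, add_div]
            have hdd : gN f (n+1)/η ≤ τ/η := (div_le_div_iff_of_pos_right hη0).mpr hg2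
            linarith
          simp only [hclsNdef]
          calc ⌊(∑ i ∈ Finset.range (n+1+1), gN f i)/η⌋
              ≤ ⌊(∑ i ∈ Finset.range (n+1), gN f i)/η + τ/η⌋ := Int.floor_le_floor h1
            _ ≤ ⌊(∑ i ∈ Finset.range (n+1), gN f i)/η⌋ + ⌊τ/η⌋ + 1 := floor_add_le _ _
        rw [he, Finset.mem_Icc]
        omega
    have haNclose : ∀ f f', (∀ j, f j ∈ E j) → (∀ j, f' j ∈ E j) → inc f = inc f' →
        ∀ j : Fin k, |aN f (j:ℕ) - aN f' (j:ℕ)| < η := by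
      intro f f' hf hf' hie j
      have hcls : ∀ n, n < k → clsN f n = clsN f' n := by
        intro n
        induction n with
        | zero =>
          intro hn
          have h0 := congrFun hie ⟨0, hn⟩
          simp only [hincdef] at h0
          simpa using h0
        | succ n ih =>
          intro hn
          have hih := ih (Nat.lt_of_succ_lt hn)
          have h1 := congrFun hie ⟨n+1, hn⟩
          simp only [hincdef] at h1
          simp only [Fin.val_mk, Nat.succ_ne_zero, if_false, Nat.add_sub_cancel] at h1
          omega
      have hc := hcls (j:ℕ) j.isLt
      have hfloor : ⌊(∑ i ∈ Finset.range ((j:ℕ)+1), gN f i)/η⌋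
          = ⌊(∑ i ∈ Finset.range ((j:ℕ)+1), gN f' i)/η⌋ := by
        simpa only [hclsNdef] using hc
      have h1 := Int.floor_le ((∑ i ∈ Finset.range ((j:ℕ)+1), gN f i)/η)
      have h2 := Int.lt_floor_add_one ((∑ i ∈ Finset.range ((j:ℕ)+1), gN f i)/η)
      have h3 := Int.floor_le ((∑ i ∈ Finset.range ((j:ℕ)+1), gN f' i)/η)
      have h4 := Int.lt_floor_add_one ((∑ i ∈ Finset.range ((j:ℕ)+1), gN f' i)/η)
      rw [hfloor] at h1 h2
      have hdiv : |(∑ i ∈ Finset.range ((j:ℕ)+1), gN f i)/η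
          - (∑ i ∈ Finset.range ((j:ℕ)+1), gN f' i)/η| < 1 :=
        abs_lt.mpr ⟨by linarith, by linarith⟩
      have he : aN f (j:ℕ) - aN f' (j:ℕ)
          = η * ((∑ i ∈ Finset.range ((j:ℕ)+1), gN f i)/η
            - (∑ i ∈ Finset.range ((j:ℕ)+1), gN f' i)/η) := by
        simp only [haNdef]
        rw [mul_sub, mul_div_cancel₀ _ (ne_of_gt hη0), mul_div_cancel₀ _ (ne_of_gt hη0)]
        ring
      rw [he, abs_mul, abs_of_pos hη0]
      calc η * |(∑ i ∈ Finset.range ((j:ℕ)+1), gN f i)/η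
            - (∑ i ∈ Finset.range ((j:ℕ)+1), gN f' i)/η| < η * 1 :=
          mul_lt_mul_of_pos_left hdiv hη0
        _ = η := mul_one η
    -- separation of glued orbits within a class
    have hsep : ∀ f f', (∀ j, f j ∈ E j) → (∀ j, f' j ∈ E j) → inc f = inc f' → f ≠ f' →
        θ < bowenDist φ T (yy f) (yy f') ∧ yy f ≠ yy f' := by
      intro f f' hf hf' hie hne
      obtain ⟨j, hj⟩ := Function.ne_iff.mp hne
      have hγsep := hEsep j (Finset.mem_coe.mpr (hf j)) (Finset.mem_coe.mpr (hf' j)) hj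
      obtain ⟨sσ, hsσ, hbig⟩ := exists_big (htpos j).le hγsep
      have hΔ := haNclose f f' hf hf' hie j
      have haT := haNT f hf j
      have haT' := haNT f' hf' j
      have hann := haNnn f hf (j:ℕ)
      have hann' := haNnn f' hf' (j:ℕ)
      set a := aN f (j:ℕ) with hadef
      set a' := aN f' (j:ℕ) with hadef'
      set am := max a a' with hamdef
      have habs := abs_lt.mp hΔ
      have hama : am - a ≤ η := by
        rcases le_total a a' with h | h
        · rw [hamdef, max_eq_right h]; linarith
        · rw [hamdef, max_eq_left h]; linarith
      have hama' : am - a' ≤ η := by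
        rcases le_total a a' with h | h
        · rw [hamdef, max_eq_right h]; linarith
        · rw [hamdef, max_eq_left h]; linarith
      have hama0 : a ≤ am := le_max_left _ _
      have hama0' : a' ≤ am := le_max_right _ _
      -- one-sided estimate
      have hside : ∀ (g : Fin k → M), (∀ i, g i ∈ E i) →
          aN g (j:ℕ) ≤ am → am - aN g (j:ℕ) ≤ η →
          dist (φ (am + sσ) (yy g)) (φ sσ (g j)) ≤ L*δ + δ/2 := by
        intro g hg hle hsmall
        have e1 : φ (am + sσ) (yy g) = φ (am - aN g (j:ℕ)) (φ sσ (φ (aN g (j:ℕ)) (yy g))) := by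
          rw [← hadd sσ (aN g (j:ℕ)) (yy g), ← hadd]
          congr 1
          ring
        rw [e1]
        have hlip := hLip (am - aN g (j:ℕ))
          ⟨by linarith, by linarith⟩
        have h1 : dist (φ (am - aN g (j:ℕ)) (φ sσ (φ (aN g (j:ℕ)) (yy g))))
            (φ (am - aN g (j:ℕ)) (φ sσ (g j)))
            ≤ L * dist (φ sσ (φ (aN g (j:ℕ)) (yy g))) (φ sσ (g j)) := by
          have hh := hlip.dist_le_mul (φ sσ (φ (aN g (j:ℕ)) (yy g))) (φ sσ (g j))
          rwa [Real.coe_toNNReal L (by linarith)] at hh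
        have h2 : dist (φ sσ (φ (aN g (j:ℕ)) (yy g))) (φ sσ (g j)) < δ :=
          lt_of_le_of_lt (dist_le_bowen hcont hsσ _ _) (hshadowN g hg j)
        have h3 : dist (φ (am - aN g (j:ℕ)) (φ sσ (g j))) (φ sσ (g j)) ≤ δ/2 :=
          hηp _ _ (by linarith) hsmall
        have h4 : L * dist (φ sσ (φ (aN g (j:ℕ)) (yy g))) (φ sσ (g j)) ≤ L * δ :=
          mul_le_mul_of_nonneg_left h2.le (by linarith)
        calc dist (φ (am - aN g (j:ℕ)) (φ sσ (φ (aN g (j:ℕ)) (yy g)))) (φ sσ (g j))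
            ≤ dist (φ (am - aN g (j:ℕ)) (φ sσ (φ (aN g (j:ℕ)) (yy g))))
                (φ (am - aN g (j:ℕ)) (φ sσ (g j)))
              + dist (φ (am - aN g (j:ℕ)) (φ sσ (g j))) (φ sσ (g j)) := dist_triangle _ _ _
          _ ≤ L*δ + δ/2 := add_le_add (le_trans h1 h4) h3
      have hs1 := hside f hf hama0 hama
      have hs2 := hside f' hf' hama0' hama'
      have hu0 : 0 ≤ am + sσ := by
        have := hsσ.1
        linarith
      have huT : am + sσ ≤ T := by
        have hmT : am + ts j ≤ T := by
          rcases le_total a a' with h | h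
          · rw [hamdef, max_eq_right h]; exact haT'
          · rw [hamdef, max_eq_left h]; exact haT
        have := hsσ.2
        linarith
      have hbig2 : θ < dist (φ (am + sσ) (yy f)) (φ (am + sσ) (yy f')) := by
        have htri : dist (φ sσ (f j)) (φ sσ (f' j))
            ≤ dist (φ sσ (f j)) (φ (am+sσ) (yy f))
              + dist (φ (am+sσ) (yy f)) (φ (am+sσ) (yy f'))
              + dist (φ (am+sσ) (yy f')) (φ sσ (f' j)) := dist_triangle4 _ _ _ _
        have hc1 : dist (φ sσ (f j)) (φ (am+sσ) (yy f)) ≤ L*δ + δ/2 := by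
          rw [dist_comm]; exact hs1
        have hc2 : dist (φ (am+sσ) (yy f')) (φ sσ (f' j)) ≤ L*δ + δ/2 := hs2
        have hγ1 := hγ.1
        linarith [hbig]
      constructor
      · have hd := dist_le_bowen hcont (Set.mem_Icc.mpr ⟨hu0, huT⟩) (yy f) (yy f')
        linarith
      · intro hyy
        rw [hyy] at hbig2
        simp only [dist_self] at hbig2
        linarith
    -- per-fiber estimate
    have hfiber : ∀ v ∈ Finset.image inc (Fintype.piFinset E),
        ∑ f ∈ (Fintype.piFinset E).filter (fun f => inc f = v),
          Real.exp (∑ j, birkhoff φ pot (f j) (ts j))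
        ≤ Real.exp ((k:ℝ)*(K + τ*P)) * partFn φ pot (Set.univ : Set (M × ℝ)) θ 0 T := by
      intro v _
      set Fb := (Fintype.piFinset E).filter (fun f => inc f = v) with hFbdef
      have hFbmem : ∀ f ∈ Fb, ∀ j, f j ∈ E j := by
        intro f hfm j
        exact (Fintype.mem_piFinset.mp (Finset.mem_filter.mp hfm).1) j
      have hFbcls : ∀ f ∈ Fb, inc f = v := fun f hfm => (Finset.mem_filter.mp hfm).2
      have hstep1 : ∑ f ∈ Fb, Real.exp (∑ j, birkhoff φ pot (f j) (ts j))
          ≤ ∑ f ∈ Fb, Real.exp ((k:ℝ)*(K+τ*P)) * Real.exp (birkhoff φ pot (yy f) T) := by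
        apply Finset.sum_le_sum
        intro f hfm
        rw [← Real.exp_add]
        exact Real.exp_le_exp.mpr (by linarith [hbirkT f (hFbmem f hfm)])
      have hinj : ∀ f ∈ Fb, ∀ f' ∈ Fb, yy f = yy f' → f = f' := by
        intro f hfm f' hfm' hyy
        by_contra hne
        exact (hsep f f' (hFbmem f hfm) (hFbmem f' hfm')
          ((hFbcls f hfm).trans (hFbcls f' hfm').symm) hne).2 hyy
      have himg : ∑ f ∈ Fb, Real.exp (birkhoff φ pot (yy f) T)
          = ∑ z ∈ Fb.image yy, Real.exp (birkhoff φ pot z T) :=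
        (Finset.sum_image (f := fun z => Real.exp (birkhoff φ pot z T)) hinj).symm
      have hsepY : IsSeparatedSet φ T θ (↑(Fb.image yy) : Set M) := by
        intro z hz z' hz' hne
        obtain ⟨f, hfm, rfl⟩ := Finset.mem_image.mp hz
        obtain ⟨f', hfm', rfl⟩ := Finset.mem_image.mp hz'
        have hffne : f ≠ f' := fun h => hne (by rw [h])
        exact (hsep f f' (hFbmem f hfm) (hFbmem f' hfm')
          ((hFbcls f hfm).trans (hFbcls f' hfm').symm) hffne).1
      have hle : ∑ z ∈ Fb.image yy, Real.exp (birkhoff φ pot z T)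
          ≤ partFn φ pot (Set.univ : Set (M × ℝ)) θ 0 T := by
        apply le_csSup hbdd
        refine ⟨Fb.image yy, by simp, hsepY, ?_⟩
        exact Finset.sum_congr rfl fun z _ => by rw [hPhi0]
      calc ∑ f ∈ Fb, Real.exp (∑ j, birkhoff φ pot (f j) (ts j))
          ≤ ∑ f ∈ Fb, Real.exp ((k:ℝ)*(K+τ*P)) * Real.exp (birkhoff φ pot (yy f) T) := hstep1
        _ = Real.exp ((k:ℝ)*(K+τ*P)) * ∑ f ∈ Fb, Real.exp (birkhoff φ pot (yy f) T) := by
            rw [Finset.mul_sum]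
        _ = Real.exp ((k:ℝ)*(K+τ*P)) * ∑ z ∈ Fb.image yy, Real.exp (birkhoff φ pot z T) := by
            rw [himg]
        _ ≤ Real.exp ((k:ℝ)*(K+τ*P)) * partFn φ pot (Set.univ : Set (M × ℝ)) θ 0 T :=
            mul_le_mul_of_nonneg_left hle (Real.exp_nonneg _)
    -- assemble
    have hcard : ((Finset.image inc (Fintype.piFinset E)).card : ℝ) ≤ (A:ℝ)^k := by
      have hsub : Finset.image inc (Fintype.piFinset E) ⊆
          Fintype.piFinset (fun _ : Fin k => Finset.Icc (0:ℤ) (⌊τ/η⌋ + 1)) := by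
        intro v hv
        obtain ⟨f, hfm, rfl⟩ := Finset.mem_image.mp hv
        rw [Fintype.mem_piFinset]
        exact hincmem f (Fintype.mem_piFinset.mp hfm)
      have hcard1 := Finset.card_le_card hsub
      rw [Fintype.card_piFinset] at hcard1
      have hcc : (Finset.Icc (0:ℤ) (⌊τ/η⌋ + 1)).card = A := by
        rw [Int.card_Icc]
        omega
      simp only [hcc, Finset.prod_const, Finset.card_univ, Fintype.card_fin] at hcard1
      calc ((Finset.image inc (Fintype.piFinset E)).card : ℝ) ≤ ((A^k : ℕ) : ℝ) := by
            exact_mod_cast hcard1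
        _ = (A:ℝ)^k := by push_cast; ring
    calc ∑ f ∈ Fintype.piFinset E, Real.exp (∑ j, birkhoff φ pot (f j) (ts j))
        = ∑ v ∈ Finset.image inc (Fintype.piFinset E),
            ∑ f ∈ (Fintype.piFinset E).filter (fun f => inc f = v),
              Real.exp (∑ j, birkhoff φ pot (f j) (ts j)) :=
          (Finset.sum_fiberwise_of_maps_to (fun f hf => Finset.mem_image_of_mem _ hf) _).symm
      _ ≤ ∑ _v ∈ Finset.image inc (Fintype.piFinset E),
            Real.exp ((k:ℝ)*(K + τ*P)) * partFn φ pot (Set.univ : Set (M × ℝ)) θ 0 T :=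
          Finset.sum_le_sum hfiber
      _ = ((Finset.image inc (Fintype.piFinset E)).card : ℝ) *
            (Real.exp ((k:ℝ)*(K + τ*P)) * partFn φ pot (Set.univ : Set (M × ℝ)) θ 0 T) := by
          rw [Finset.sum_const, nsmul_eq_mul]
      _ ≤ (A:ℝ)^k *
            (Real.exp ((k:ℝ)*(K + τ*P)) * partFn φ pot (Set.univ : Set (M × ℝ)) θ 0 T) := by
          apply mul_le_mul_of_nonneg_right hcard
          exact mul_nonneg (Real.exp_nonneg _) hΛ0
      _ = ((A:ℝ) * Real.exp (K + τ * P))^k * partFn φ pot (Set.univ : Set (M × ℝ)) θ 0 T := by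
          rw [mul_pow, ← Real.exp_nat_mul]
          ring
  have h0 : ∀ j ∈ (Finset.univ : Finset (Fin k)), (0:ℝ) ∈ SGG j := by
    intro j _
    exact ⟨∅, by simp, by intro x hx; simp at hx, by simp⟩
  have hnn : ∀ j ∈ (Finset.univ : Finset (Fin k)), ∀ r ∈ SGG j, 0 ≤ r := by
    rintro j - r ⟨E, -, -, rfl⟩
    exact Finset.sum_nonneg fun x _ => (Real.exp_pos _).le
  exact prod_sSup_le Finset.univ SGG _ h0 hnn key
end
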